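/- Let R be a commutative ring of prime characteristic p, let 𝔞 be an ideal of R generated by l elements containing a nonzerodivisor (more precisely, 𝔞 ∩ R° ≠ ∅ where R° is the set of elements not in any minimal prime), let t > 0 be a real number and fix e > 0. Then there exists c' ∈ R° such that c' · 𝔞^⌈t(p^(ne+k) − 1)⌉ ⊆ (𝔞^⌈t(p^(ne) − 1)⌉)^[p^k] for all integers n > 0 and all 0 ≤ k < e. In fact any c' ∈ 𝔞^((l+1)p^e) ∩ R° works. -/

import Mathlib

/-- The Frobenius (bracket) power `I^[q]`. -/
def frobPow {R : Type*} [CommRing R] (I : Ideal R) (q : ℕ) : Ideal R :=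
  Ideal.span ((fun x => x ^ q) '' (I : Set R))

/-- `R°`: the set of elements not contained in any minimal prime of `R`. -/
def Rcirc (R : Type*) [CommRing R] : Set R :=
  {x | ∀ P ∈ minimalPrimes R, x ∉ P}

lemma prodpow_mem_aux {R : Type*} [CommRing R] {l : ℕ} (f : Fin l → R) (β : Fin l → ℕ)
    (s : Finset (Fin l)) :
    (∏ j ∈ s, f j ^ β j) ∈ (Ideal.span (Set.range f)) ^ (∑ j ∈ s, β j) := by
  classical
  induction s using Finset.induction with
  | empty => simp [Ideal.one_eq_top]
  | insert _ _ h ih =>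
      rw [Finset.prod_insert h, Finset.sum_insert h, pow_add]
      exact Ideal.mul_mem_mul (Ideal.pow_mem_pow (Ideal.subset_span (Set.mem_range_self _)) _) ih

lemma key {R : Type*} [CommRing R] {l : ℕ} (f : Fin l → R) (m q N : ℕ) (hq : 0 < q)
    (hN : (m + l) * q ≤ N) :
    (Ideal.span (Set.range f)) ^ N ≤ frobPow ((Ideal.span (Set.range f)) ^ m) q := by
  classical
  rw [Ideal.span, Submodule.span_pow, Submodule.span_le]
  rintro x hx
  rw [Set.mem_pow] at hx
  obtain ⟨g, hg⟩ := hx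
  choose idx hidx using fun i => (g i).2
  have hx' : x = ∏ i : Fin N, f (idx i) := by
    rw [← hg, List.prod_ofFn]
    exact Finset.prod_congr rfl fun i _ => (hidx i).symm
  set α : Fin l → ℕ := fun j => (Finset.univ.filter (fun i => idx i = j)).card with hα
  have hprod : ∏ j, f j ^ α j = x := by
    rw [hx', ← Finset.prod_fiberwise' Finset.univ idx f]
    exact Finset.prod_congr rfl fun j _ => (Finset.prod_const _).symm
  have hsum : ∑ j, α j = N := by
    have := Finset.card_eq_sum_card_fiberwise (fun i (_ : i ∈ Finset.univ) =>
      Finset.mem_univ (idx i))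
    simpa using this.symm
  set β : Fin l → ℕ := fun j => α j / q with hβ
  set r : Fin l → ℕ := fun j => α j % q with hrr
  have hdecomp : ∀ j, α j = β j * q + r j := by
    intro j
    rw [hβ, hrr, Nat.mul_comm]
    exact (Nat.div_add_mod (α j) q).symm
  have hrlt : ∀ j, r j + 1 ≤ q := fun j => Nat.mod_lt _ hq
  have hsum2 : (∑ j, β j) * q + (∑ j, r j) = N := by
    rw [← hsum, Finset.sum_mul]
    rw [← Finset.sum_add_distrib]
    exact Finset.sum_congr rfl fun j _ => (hdecomp j).symm
  have hrsum : (∑ j, r j) + l ≤ l * q := by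
    have := Finset.sum_le_sum (fun j (_ : j ∈ (Finset.univ : Finset (Fin l))) => hrlt j)
    simpa [Finset.sum_add_distrib, mul_comm] using this
  have hm : m ≤ ∑ j, β j := by
    have h1 : m * q ≤ (∑ j, β j) * q := by nlinarith
    exact Nat.le_of_mul_le_mul_right h1 hq
  have hy : (∏ j, f j ^ β j) ∈ (Ideal.span (Set.range f)) ^ m :=
    Ideal.pow_le_pow_right hm (prodpow_mem_aux f β Finset.univ)
  have hyq : (∏ j, f j ^ β j) ^ q ∈ frobPow ((Ideal.span (Set.range f)) ^ m) q :=
    Ideal.subset_span ⟨_, hy, rfl⟩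
  have : x = (∏ j, f j ^ β j) ^ q * ∏ j, f j ^ r j := by
    rw [← hprod, ← Finset.prod_pow, ← Finset.prod_mul_distrib]
    exact Finset.prod_congr rfl fun j _ => by rw [← pow_mul, ← pow_add, ← hdecomp]
  rw [this]
  exact Ideal.mul_mem_right _ _ hyq

theorem stmt2 (R : Type*) [CommRing R] [IsReduced R]
    (p : ℕ) (hp : p.Prime) [CharP R p]
    (l : ℕ) (a : Ideal R) (f : Fin l → R) (hgen : a = Ideal.span (Set.range f))
    (hcirc : ∃ x ∈ a, x ∈ Rcirc R)
    (t : ℝ) (ht : 0 < t) (e : ℕ) (he : 0 < e) :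
    (∃ c' ∈ Rcirc R, ∀ n > 0, ∀ k < e,
        ∀ x ∈ a ^ ⌈t * ((p : ℝ) ^ (n * e + k) - 1)⌉₊,
          c' * x ∈ frobPow (a ^ ⌈t * ((p : ℝ) ^ (n * e) - 1)⌉₊) (p ^ k)) ∧
    (∀ c' ∈ a ^ ((l + 1) * p ^ e), c' ∈ Rcirc R → ∀ n > 0, ∀ k < e,
        ∀ x ∈ a ^ ⌈t * ((p : ℝ) ^ (n * e + k) - 1)⌉₊,
          c' * x ∈ frobPow (a ^ ⌈t * ((p : ℝ) ^ (n * e) - 1)⌉₊) (p ^ k)) := by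
  have hp1 : (1 : ℝ) ≤ (p : ℝ) := by exact_mod_cast hp.one_lt.le
  have main : ∀ c' ∈ a ^ ((l + 1) * p ^ e), ∀ n > 0, ∀ k < e,
      ∀ x ∈ a ^ ⌈t * ((p : ℝ) ^ (n * e + k) - 1)⌉₊,
        c' * x ∈ frobPow (a ^ ⌈t * ((p : ℝ) ^ (n * e) - 1)⌉₊) (p ^ k) := by
    intro c' hc' n hn k hk x hx
    set M := ⌈t * ((p : ℝ) ^ (n * e) - 1)⌉₊ with hM
    set N := ⌈t * ((p : ℝ) ^ (n * e + k) - 1)⌉₊ with hN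
    have hcx : c' * x ∈ a ^ ((l + 1) * p ^ e + N) := by
      rw [pow_add]
      exact Ideal.mul_mem_mul hc' hx
    have hineq : (M + l) * p ^ k ≤ (l + 1) * p ^ e + N := by
      have hpne1 : (1 : ℝ) ≤ (p : ℝ) ^ (n * e) := one_le_pow₀ hp1
      have hpk1 : (1 : ℝ) ≤ (p : ℝ) ^ k := one_le_pow₀ hp1
      have hMle : (M : ℝ) < t * ((p : ℝ) ^ (n * e) - 1) + 1 :=
        Nat.ceil_lt_add_one (by nlinarith)
      have hNge : t * ((p : ℝ) ^ (n * e + k) - 1) ≤ (N : ℝ) := Nat.le_ceil _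
      have hpke : (p : ℝ) ^ k ≤ (p : ℝ) ^ e := pow_le_pow_right₀ hp1 hk.le
      have hsplit : (p : ℝ) ^ (n * e + k) = (p : ℝ) ^ (n * e) * (p : ℝ) ^ k :=
        pow_add _ _ _
      have : ((M + l) * p ^ k : ℝ) ≤ ((l + 1) * p ^ e + N : ℝ) := by
        nlinarith [mul_le_mul_of_nonneg_right hMle.le (le_trans zero_le_one hpk1)]
      exact_mod_cast this
    have := key f M (p ^ k) ((l + 1) * p ^ e + N)
      (pow_pos hp.pos k) (by linarith [hineq]) (by rw [← hgen]; exact hcx)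
    rwa [← hgen] at this
  constructor
  · obtain ⟨x₀, hxa, hx0⟩ := hcirc
    refine ⟨x₀ ^ ((l + 1) * p ^ e), ?_, main _ (Ideal.pow_mem_pow hxa _)⟩
    intro P hP hmem
    exact hx0 P hP (hP.1.1.mem_of_pow_mem _ hmem)
  · exact fun c' hc' _ => main c' hc'
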